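/- Let g = 2r with r ≥ 2, and let G_1 = π_g / N(ℬ^g_1). Then for every 1 ≤ k ≤ r the image of the word b_k a_{g+1−k} b_{g+1−k} a_{g+1−k}^{-1} in G_1 is trivial (i.e., b_k = a_{g+1−k} b_{g+1−k}^{-1} a_{g+1−k}^{-1} holds in G_1). -/
import Mathlib


namespace Paper

/-- The free group `F_g` on the `2g` generators `a_1, b_1, …, a_g, b_g`
(the pair `(i, false)` is `a_{i+1}`, the pair `(i, true)` is `b_{i+1}`). -/
abbrev F (g : ℕ) := FreeGroup (Fin g × Bool)

/-- The generator `a_i` of `F_g`, for `1 ≤ i ≤ g`; by convention `a_i = 1` for out-of-range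
indices (in particular `a_{g+1} = 1`). -/
def a (g i : ℕ) : F g :=
  if h : 1 ≤ i ∧ i ≤ g then FreeGroup.of (⟨i - 1, by omega⟩, false) else 1

/-- The generator `b_i` of `F_g`, for `1 ≤ i ≤ g`. -/
def b (g i : ℕ) : F g :=
  if h : 1 ≤ i ∧ i ≤ g then FreeGroup.of (⟨i - 1, by omega⟩, true) else 1

/-- The word `c_i = b_i⁻¹ ⋯ b_2⁻¹ b_1⁻¹ (a_1 b_1 a_1⁻¹)(a_2 b_2 a_2⁻¹) ⋯ (a_i b_i a_i⁻¹)`,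
with `c_0 = 1`. -/
def c (g i : ℕ) : F g :=
  (((List.range i).reverse.map fun j => (b g (j + 1))⁻¹).prod) *
    (((List.range i).map fun j => a g (j + 1) * b g (j + 1) * (a g (j + 1))⁻¹).prod)

/-- The product `b_i b_{i+1} ⋯ b_j`. -/
def prodb (g i j : ℕ) : F g := ((List.range (j + 1 - i)).map fun l => b g (i + l)).prod

/-- `B^h_{0,1} = b_1 b_2 ⋯ b_h`. -/
def B01 (g h : ℕ) : F g := prodb g 1 h

/-- `B^h_{0,2} = b_1 b_2 ⋯ b_h · c_h a_{h+1}`. -/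
def B02 (g h : ℕ) : F g := prodb g 1 h * c g h * a g (h + 1)

/-- `B^h_{0,s}` for `s = 1, 2`. -/
def B0 (g s h : ℕ) : F g := if s = 1 then B01 g h else B02 g h

/-- `B^h_{2k-1} = a_k · b_k b_{k+1} ⋯ b_{h+1-k} · c_{h+1-k} a_{h+1-k}`. -/
def Bodd (g h k : ℕ) : F g :=
  a g k * prodb g k (h + 1 - k) * c g (h + 1 - k) * a g (h + 1 - k)

/-- `B^h_{2k} = a_k · b_{k+1} b_{k+2} ⋯ b_{h-k} · c_{h-k} a_{h+1-k}`. -/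
def Beven (g h k : ℕ) : F g :=
  a g k * prodb g (k + 1) (h - k) * c g (h - k) * a g (h + 1 - k)

/-- The set of words `ℬ^h_s`: it consists of `B^h_{0,s}, B^h_1, …, B^h_h` (the odd-indexed
`B^h_{2k-1}` for `2k - 1 ≤ h` and the even-indexed `B^h_{2k}` for `2k ≤ h`), together with
`a_{r+1}` and `c_r a_{r+1}` when `h = 2r + 1` is odd. -/
def Bset (g s h : ℕ) : Set (F g) :=
  {B0 g s h}
    ∪ {w | ∃ k, 1 ≤ k ∧ 2 * k - 1 ≤ h ∧ w = Bodd g h k}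
    ∪ {w | ∃ k, 1 ≤ k ∧ 2 * k ≤ h ∧ w = Beven g h k}
    ∪ (if h % 2 = 1 then {a g (h / 2 + 1), c g (h / 2) * a g (h / 2 + 1)} else (∅ : Set (F g)))

/-- The genus-`g` surface group `π_g`, presented with generators `a_1, b_1, …, a_g, b_g`
and the single relator `c_g`. -/
abbrev pi (g : ℕ) := PresentedGroup ({c g g} : Set (F g))

/-- The natural projection `F_g → π_g`. -/
abbrev toPi (g : ℕ) : F g →* pi g := PresentedGroup.mk _

/-- The quotient of `π_g` by the normal closure of the images of a set `S` of words. -/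
abbrev quotBy (g : ℕ) (S : Set (F g)) :=
  pi g ⧸ Subgroup.normalClosure (toPi g '' S)

/-- The projection `π_g → π_g / N(S)`. -/
abbrev projBy (g : ℕ) (S : Set (F g)) : pi g →* quotBy g S :=
  QuotientGroup.mk' _

variable (g : ℕ)

lemma c_succ (i : ℕ) :
    c g (i+1) = (b g (i+1))⁻¹ * c g i * (a g (i+1) * b g (i+1) * (a g (i+1))⁻¹) := by
  simp [c, List.range_succ, mul_assoc]

lemma prodb_back (i j : ℕ) (h : i ≤ j + 1) : prodb g i (j+1) = prodb g i j * b g (j+1) := by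
  have h1 : j + 1 + 1 - i = (j + 1 - i) + 1 := by omega
  have h2 : i + (j + 1 - i) = j + 1 := by omega
  rw [prodb, h1, List.range_succ]
  simp [prodb, h2]

lemma prodb_front (i j : ℕ) (h : i ≤ j) : prodb g i j = b g i * prodb g (i+1) j := by
  have h1 : j + 1 - i = (j - i) + 1 := by omega
  have h2 : j + 1 - (i+1) = j - i := by omega
  have h3 : ((fun l => b g (i + l)) ∘ Nat.succ) = fun l => b g (i + 1 + l) := by
    funext l
    simp only [Function.comp]
    congr 1
    omega
  rw [prodb, prodb, h1, h2, List.range_succ_eq_map]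
  simp only [List.map_cons, List.map_map, List.prod_cons, Nat.add_zero, h3]

lemma aux1 {G : Type*} [Group G] (x y P C u v : G)
    (h1 : x * (y * P * v) * (v⁻¹ * C * (u * v * u⁻¹)) * u = 1)
    (h2 : x * P * C * u = 1) : v = x * y⁻¹ * x⁻¹ := by
  have h1' : x * y * (P * C * u) * v = 1 := by rw [← h1]; group
  have h2' : P * C * u = x⁻¹ := by
    have hx : x * (P * C * u) = 1 := by rw [← h2]; group
    exact eq_inv_of_mul_eq_one_right hx
  rw [h2'] at h1'
  have hv := eq_inv_of_mul_eq_one_right h1'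
  rw [hv]; group

lemma aux2 {G : Type*} [Group G] (x y p q u v : G)
    (h1 : x * p * q * u = 1) (h2 : y * p * q * v = 1) (h3 : u * x = 1) : v * y = 1 := by
  have hpq : p * q = 1 := by
    have hu : u = (x * p * q)⁻¹ := eq_inv_of_mul_eq_one_right h1
    rw [hu] at h3
    have h4 : x * p * q = x := inv_mul_eq_one.mp h3
    have h5 : x * (p * q) = x * 1 := by rw [mul_one, ← mul_assoc]; exact h4
    exact mul_left_cancel h5
  have hv : v = (y * p * q)⁻¹ := eq_inv_of_mul_eq_one_right h2
  rw [hv, mul_assoc, hpq, mul_one]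
  exact inv_mul_cancel y

/-- For `g = 2r` with `r ≥ 2`, in `G_1 = π_g / N(ℬ^g_1)` the image of the
word `b_k a_{g+1-k} b_{g+1-k} a_{g+1-k}⁻¹` is trivial for every `1 ≤ k ≤ r`
(i.e. `b_k = a_{g+1-k} b_{g+1-k}⁻¹ a_{g+1-k}⁻¹` holds in `G_1`). -/
theorem G1_bk_relation (r g : ℕ) (hr : 2 ≤ r) (hg : g = 2 * r) :
    ∀ k, 1 ≤ k → k ≤ r →
      projBy g (Bset g 1 g)
        (toPi g (b g k * a g (g + 1 - k) * b g (g + 1 - k) * (a g (g + 1 - k))⁻¹)) = 1 := by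
  set φ : F g →* quotBy g (Bset g 1 g) := (projBy g (Bset g 1 g)).comp (toPi g) with hφ
  have key : ∀ w ∈ Bset g 1 g, φ w = 1 := by
    intro w hw
    have hm : toPi g w ∈ Subgroup.normalClosure (toPi g '' Bset g 1 g) :=
      Subgroup.subset_normalClosure ⟨w, hw, rfl⟩
    exact (QuotientGroup.eq_one_iff _).mpr hm
  have hc : φ (c g g) = 1 := by
    have h1 : toPi g (c g g) = 1 :=
      (QuotientGroup.eq_one_iff _).mpr (Subgroup.subset_normalClosure rfl)
    show projBy g (Bset g 1 g) (toPi g (c g g)) = 1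
    rw [h1, map_one]
  have h0 : φ (prodb g 1 g) = 1 := by
    have : φ (B01 g g) = 1 := key _ (Or.inl (Or.inl (Or.inl rfl)))
    rwa [B01] at this
  have hodd : ∀ k, 1 ≤ k → 2 * k - 1 ≤ g → φ (Bodd g g k) = 1 := by
    intro k h1 h2
    exact key _ (Or.inl (Or.inl (Or.inr ⟨k, h1, h2, rfl⟩)))
  have heven : ∀ k, 1 ≤ k → 2 * k ≤ g → φ (Beven g g k) = 1 := by
    intro k h1 h2
    exact key _ (Or.inl (Or.inr ⟨k, h1, h2, rfl⟩))
  -- Step 1 : b_{g+1-k} = a_k b_k⁻¹ a_k⁻¹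
  have hstar : ∀ k, 1 ≤ k → k ≤ r →
      φ (b g (g + 1 - k)) = φ (a g k) * (φ (b g k))⁻¹ * (φ (a g k))⁻¹ := by
    intro k hk1 hkr
    have e1 : g + 1 - k = g - k + 1 := by omega
    have hBo := hodd k hk1 (by omega)
    have hBe := heven k hk1 (by omega)
    rw [Bodd, e1, prodb_back g k (g - k) (by omega),
      prodb_front g k (g - k) (by omega), c_succ] at hBo
    rw [Beven, e1] at hBe
    simp only [map_mul, map_inv] at hBo hBe
    rw [e1]
    exact aux1 _ _ _ _ _ _ hBo hBe
  -- Step 2 : a_{g+1-k} a_k = 1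
  have hT : ∀ k, 1 ≤ k → k ≤ r → φ (a g (g + 1 - k)) * φ (a g k) = 1 := by
    intro k
    induction k with
    | zero => omega
    | succ n ih =>
      intro _ hle
      by_cases hn : n = 0
      · subst hn
        have hBo := hodd 1 le_rfl (by omega)
        rw [Bodd] at hBo
        simp only [Nat.add_sub_cancel] at hBo ⊢
        simp only [map_mul, h0, hc, mul_one] at hBo
        have := eq_inv_of_mul_eq_one_right hBo
        rw [this]
        exact inv_mul_cancel _
      · have IH := ih (by omega) (by omega)
        have e2 : g + 1 - (n + 1) = g - n := by omega
        have hBo := hodd (n + 1) (by omega) (by omega)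
        have hBe := heven n (by omega) (by omega)
        rw [Bodd, e2] at hBo
        rw [Beven] at hBe
        simp only [map_mul] at hBo hBe
        rw [e2]
        exact aux2 _ _ _ _ _ _ hBe hBo IH
  intro k hk1 hkr
  show φ (b g k * a g (g + 1 - k) * b g (g + 1 - k) * (a g (g + 1 - k))⁻¹) = 1
  simp only [map_mul, map_inv]
  rw [hstar k hk1 hkr]
  have := eq_inv_of_mul_eq_one_right (hT k hk1 hkr)
  rw [this]
  group
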